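/- The sum over k ≥ 1 of h_k^{(2)}/(2k−1)³ equals (31/64)·ζ(5) + (9/32)·ζ(2)·ζ(3). -/

import Mathlib

open scoped BigOperators
/-- Odd harmonic number `h_k^{(n)} = ∑_{i=1}^k 1/(2i-1)^n`. -/
noncomputable def h (n k : ℕ) : ℝ := ∑ i ∈ Finset.range k, (1 : ℝ) / (2 * (i : ℝ) + 1) ^ n

/-- Generalized harmonic number `H_k^{(n)} = ∑_{i=1}^k 1/i^n`. -/
noncomputable def H (n k : ℕ) : ℝ := ∑ i ∈ Finset.range k, (1 : ℝ) / ((i : ℝ) + 1) ^ n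

/-- Riemann zeta value at a positive integer `m ≥ 2`: `ζ(m) = ∑_{n≥1} 1/n^m`. -/
noncomputable def Z (m : ℕ) : ℝ := ∑' n : ℕ+, (1 : ℝ) / ((n : ℕ) : ℝ) ^ m

namespace Aux

open Filter Finset

noncomputable def o (s i : ℕ) : ℝ := 1 / (2 * (i : ℝ) + 1) ^ s

lemma two_i_pos (i : ℕ) : (0:ℝ) < 2 * (i:ℝ) + 1 := by positivity

lemma o_pos (s i : ℕ) : 0 < o s i := by unfold o; positivity

lemma o_nonneg (s i : ℕ) : 0 ≤ o s i := (o_pos s i).le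

lemma h_eq (s k : ℕ) : h s k = ∑ i ∈ Finset.range k, o s i := rfl

lemma h_nonneg (s k : ℕ) : 0 ≤ h s k := Finset.sum_nonneg fun i _ => o_nonneg s i

lemma o_le_one (s i : ℕ) : o s i ≤ 1 := by
  unfold o
  rw [div_le_one (by positivity)]
  exact one_le_pow₀ (by linarith [Nat.cast_nonneg (α := ℝ) i])

lemma o_anti (s : ℕ) {i j : ℕ} (hij : i ≤ j) : o s j ≤ o s i := by
  unfold o
  apply one_div_le_one_div_of_le (by positivity)
  apply pow_le_pow_left₀ (by positivity)
  have : (i:ℝ) ≤ j := by exact_mod_cast hij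
  linarith

lemma o_le_sq (s i : ℕ) (hs : 2 ≤ s) : o s i ≤ 1 / ((i : ℝ) + 1) ^ 2 := by
  unfold o
  apply one_div_le_one_div_of_le (by positivity)
  calc ((i:ℝ)+1)^2 ≤ (2*(i:ℝ)+1)^2 := by
        apply pow_le_pow_left₀ (by positivity)
        linarith [Nat.cast_nonneg (α := ℝ) i]
    _ ≤ (2*(i:ℝ)+1)^s := pow_le_pow_right₀ (by linarith [Nat.cast_nonneg (α := ℝ) i]) hs

lemma summable_inv_sq : Summable (fun i : ℕ => 1 / ((i : ℝ) + 1) ^ 2) := by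
  have := (summable_nat_add_iff (f := fun n : ℕ => 1 / (n : ℝ) ^ 2) 1).2
    (Real.summable_one_div_nat_pow.2 one_lt_two)
  simpa using this

lemma summable_o {s : ℕ} (hs : 2 ≤ s) : Summable (o s) :=
  Summable.of_nonneg_of_le (fun i => o_nonneg s i) (fun i => o_le_sq s i hs) summable_inv_sq

noncomputable def lam (s : ℕ) : ℝ := ∑' i : ℕ, o s i

lemma h_le_lam {s : ℕ} (hs : 2 ≤ s) (k : ℕ) : h s k ≤ lam s := by
  rw [h_eq]
  exact Summable.sum_le_tsum _ (fun i _ => o_nonneg s i) (summable_o hs)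

lemma lam_nonneg (s : ℕ) : 0 ≤ lam s := tsum_nonneg fun i => o_nonneg s i

lemma o_tendsto (s : ℕ) (hs : 1 ≤ s) : Tendsto (o s) atTop (nhds 0) := by
  apply squeeze_zero (fun i => o_nonneg s i) (fun i => ?_)
    tendsto_one_div_add_atTop_nhds_zero_nat
  calc o s i ≤ o 1 i := by
        unfold o
        apply one_div_le_one_div_of_le (by positivity)
        exact pow_le_pow_right₀ (by linarith [Nat.cast_nonneg (α := ℝ) i]) hs
    _ ≤ 1 / ((i:ℝ) + 1) := by
        unfold o
        apply one_div_le_one_div_of_le (by positivity)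
        rw [pow_one]; linarith [Nat.cast_nonneg (α := ℝ) i]

lemma Z_eq (m : ℕ) : Z m = ∑' k : ℕ, 1 / ((k : ℝ) + 1) ^ m := by
  rw [Z, ← Equiv.pnatEquivNat.symm.tsum_eq]
  apply tsum_congr
  intro k
  simp [Equiv.pnatEquivNat, Nat.succPNat]

lemma summable_Znat {m : ℕ} (hm : 2 ≤ m) : Summable (fun k : ℕ => 1 / ((k : ℝ) + 1) ^ m) := by
  apply Summable.of_nonneg_of_le (fun i => by positivity) (fun i => ?_) summable_inv_sq
  apply one_div_le_one_div_of_le (by positivity)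
  exact pow_le_pow_right₀ (by linarith [Nat.cast_nonneg (α := ℝ) i]) hm

lemma Z_nonneg (m : ℕ) : 0 ≤ Z m := by
  rw [Z_eq]; exact tsum_nonneg fun i => by positivity

lemma lam_eq {m : ℕ} (hm : 2 ≤ m) : lam m = (1 - 1 / 2 ^ m) * Z m := by
  have hsum : Summable (fun n : ℕ => 1 / (n : ℝ) ^ m) := by
    have h1 : Summable (fun n : ℕ => 1 / ((n + 1 : ℕ) : ℝ) ^ m) := by
      apply (summable_Znat hm).congr; intro k; push_cast; ring
    exact (summable_nat_add_iff (f := fun n : ℕ => 1 / (n : ℝ) ^ m) 1).mp h1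
  have hZfull : Z m = ∑' n : ℕ, 1 / (n : ℝ) ^ m := by
    rw [Z_eq, Summable.tsum_eq_zero_add (f := fun n : ℕ => 1/(n:ℝ)^m) hsum]
    simp only [Nat.cast_zero, zero_pow (show m ≠ 0 by omega), div_zero, zero_add]
    apply tsum_congr; intro k; push_cast; ring
  have heven : Summable (fun k : ℕ => 1 / (((2 * k : ℕ)) : ℝ) ^ m) := by
    apply (hsum.mul_left ((1:ℝ)/2^m)).congr
    intro k; push_cast; rw [mul_pow]; field_simp
  have hodd : Summable (fun k : ℕ => 1 / (((2 * k + 1 : ℕ)) : ℝ) ^ m) := by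
    apply (summable_o hm).congr
    intro k; unfold o; push_cast; ring
  have hsplit := tsum_even_add_odd (f := fun n : ℕ => 1/(n:ℝ)^m) heven hodd
  have he : ∑' k : ℕ, 1 / (((2 * k : ℕ)) : ℝ) ^ m = (1/2^m) * Z m := by
    rw [hZfull, ← tsum_mul_left]
    apply tsum_congr; intro k; push_cast; rw [mul_pow]; field_simp
  have ho : ∑' k : ℕ, 1 / (((2 * k + 1 : ℕ)) : ℝ) ^ m = lam m := by
    unfold lam
    apply tsum_congr; intro k; unfold o; push_cast; ring
  rw [he, ho, ← hZfull] at hsplit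
  linarith [hsplit]

/-- Telescoping: if `g` is antitone, nonneg with limit 0, then
`∑' i, (g i - g (i+m)) = ∑_{t<m} g t`. -/
lemma hasSum_telescope {g : ℕ → ℝ} (hanti : ∀ {i j : ℕ}, i ≤ j → g j ≤ g i)
    (h0 : Tendsto g atTop (nhds 0)) (m : ℕ) :
    HasSum (fun i => g i - g (i + m)) (∑ t ∈ Finset.range m, g t) := by
  rw [hasSum_iff_tendsto_nat_of_nonneg
    (fun i => sub_nonneg.2 (hanti (Nat.le_add_right i m)))]
  have key : ∀ n : ℕ, ∑ i ∈ Finset.range n, (g i - g (i + m))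
      = ∑ t ∈ Finset.range m, g t - ∑ t ∈ Finset.range m, g (n + t) := by
    intro n
    have e1 := Finset.sum_range_add g n m
    have e2 := Finset.sum_range_add g m n
    have e3 : ∑ i ∈ Finset.range n, g (i + m) = ∑ i ∈ Finset.range n, g (m + i) := by
      apply Finset.sum_congr rfl; intro i _; rw [add_comm]
    have e4 : ∑ i ∈ Finset.range (n + m), g i = ∑ i ∈ Finset.range (m + n), g i := by
      rw [add_comm]
    rw [Finset.sum_sub_distrib]
    linarith [e1, e2, e3, e4]
  have hlim : Tendsto (fun n : ℕ => ∑ t ∈ Finset.range m, g (n + t)) atTop (nhds 0) := by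
    have : Tendsto (fun n : ℕ => ∑ t ∈ Finset.range m, g (n + t)) atTop
        (nhds (∑ t ∈ Finset.range m, (0:ℝ))) := by
      apply tendsto_finset_sum
      intro t _
      exact h0.comp (tendsto_add_atTop_nat t)
    simpa using this
  simp only [key]
  simpa using tendsto_const_nhds.sub hlim

lemma hasSum_o_sub {s : ℕ} (hs : 1 ≤ s) (m : ℕ) :
    HasSum (fun i => o s i - o s (i + m)) (h s m) := by
  rw [h_eq]
  exact hasSum_telescope (fun hij => o_anti s hij) (o_tendsto s hs) m

lemma hasSum_o (s : ℕ) (hs : 2 ≤ s) : HasSum (o s) (lam s) := (summable_o hs).hasSum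

lemma hasSum_o_tail {s : ℕ} (hs : 2 ≤ s) (m : ℕ) :
    HasSum (fun i => o s (i + m)) (lam s - h s m) := by
  have h1 : Summable (fun i => o s (i + m)) :=
    (summable_nat_add_iff (f := o s) m).mpr (summable_o hs)
  have h2 := Summable.sum_add_tsum_nat_add (f := o s) m (summable_o hs)
  have : ∑' i, o s (i + m) = lam s - h s m := by
    rw [h_eq]; unfold lam at *; linarith [h2]
  exact this ▸ h1.hasSum

lemma cast_shift (i m : ℕ) : (2*(((i+m) : ℕ):ℝ)+1) = (2*(i:ℝ)+1) + 2*(m:ℝ) := by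
  push_cast; ring

lemma hasSum_Vfiber (m : ℕ) (hm : 1 ≤ m) :
    HasSum (fun i => o 2 (i + m) * o 3 i - o 2 i * o 3 (i + m))
      (6 * h 1 m * (1/(2*(m:ℝ))^4) + 3 * h 2 m * (1/(2*(m:ℝ))^3) + h 3 m * (1/(2*(m:ℝ))^2)
        - 3/4 * lam 2 * (1/(m:ℝ)^3)) := by
  have hmR : (0:ℝ) < (m:ℝ) := by exact_mod_cast hm
  have hs1 := hasSum_o_sub (s := 1) le_rfl m
  have hs2 := (hasSum_o 2 le_rfl).add (hasSum_o_tail (s := 2) le_rfl m)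
  have hs3 := hasSum_o_sub (s := 3) (by norm_num) m
  have combined := ((hs1.mul_left ((3:ℝ)/(8*(m:ℝ)^4))).sub
      (hs2.mul_left ((3:ℝ)/(8*(m:ℝ)^3)))).add (hs3.mul_left ((1:ℝ)/(4*(m:ℝ)^2)))
  have hfun : (fun i => o 2 (i+m) * o 3 i - o 2 i * o 3 (i+m)) = (fun i =>
      (3:ℝ)/(8*(m:ℝ)^4)*(o 1 i - o 1 (i+m)) - (3:ℝ)/(8*(m:ℝ)^3)*(o 2 i + o 2 (i+m))
        + (1:ℝ)/(4*(m:ℝ)^2)*(o 3 i - o 3 (i+m))) := by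
    funext i
    unfold o
    rw [cast_shift]
    have hx : (0:ℝ) < 2*(i:ℝ)+1 := two_i_pos i
    have hb : (0:ℝ) < 2*(i:ℝ)+1 + 2*(m:ℝ) := by linarith
    field_simp
    ring
  rw [hfun]
  convert combined using 1
  · rfl
  field_simp
  ring

/-! ### 2D sums -/

noncomputable def F2 (p : ℕ × ℕ) : ℝ := o 2 p.1 * o 3 p.2
/-- lower-triangular part, `p = (i,q)`, `j = i+q+1` -/
noncomputable def FL (p : ℕ × ℕ) : ℝ := o 2 p.1 * o 3 (p.1 + p.2 + 1)
/-- upper-triangular part, `p = (j,q)` resp. `(i,q)` -/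
noncomputable def FR (p : ℕ × ℕ) : ℝ := o 2 (p.1 + p.2 + 1) * o 3 p.1

lemma summable_F2 : Summable F2 :=
  (summable_o (le_refl 2)).mul_of_nonneg (summable_o (by norm_num : 2 ≤ 3))
    (fun i => o_nonneg 2 i) (fun i => o_nonneg 3 i)

lemma summable_FL : Summable FL := by
  have : FL = F2 ∘ (fun p : ℕ × ℕ => (p.1, p.1 + p.2 + 1)) := rfl
  rw [this]
  apply summable_F2.comp_injective
  intro p p' hp
  simp only [Prod.mk.injEq] at hp
  obtain ⟨h1, h2⟩ := hp
  exact Prod.ext h1 (by omega)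

lemma summable_FR : Summable FR := by
  have : FR = F2 ∘ (fun p : ℕ × ℕ => (p.1 + p.2 + 1, p.1)) := rfl
  rw [this]
  apply summable_F2.comp_injective
  intro p p' hp
  simp only [Prod.mk.injEq] at hp
  obtain ⟨h1, h2⟩ := hp
  exact Prod.ext h2 (by omega)

/-- the equivalence `(Σ j, Fin j) ≃ ℕ × ℕ` onto the lower triangle parametrization -/
def eSig : (Σ j : ℕ, Fin j) ≃ ℕ × ℕ where
  toFun x := (x.2, x.1 - x.2 - 1)
  invFun p := ⟨p.1 + p.2 + 1, ⟨p.1, by omega⟩⟩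
  left_inv := by
    rintro ⟨j, ⟨x, hx⟩⟩
    simp only
    congr 1
    · omega
    · rw [Fin.heq_ext_iff (by omega)]
  right_inv := by
    rintro ⟨i, q⟩
    have e : i + q + 1 - i - 1 = q := by omega
    simp [e]

lemma summable_hL : Summable (fun j : ℕ => h 2 j * o 3 j) := by
  apply Summable.of_nonneg_of_le (fun j => mul_nonneg (h_nonneg 2 j) (o_nonneg 3 j))
    (fun j => ?_) ((summable_o (by norm_num : 2 ≤ 3)).mul_left (lam 2))
  exact mul_le_mul_of_nonneg_right (h_le_lam le_rfl j) (o_nonneg 3 j)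

lemma summable_hR : Summable (fun j : ℕ => o 3 j * (lam 2 - h 2 (j + 1))) := by
  apply Summable.of_nonneg_of_le
    (fun j => mul_nonneg (o_nonneg 3 j) (sub_nonneg.2 (h_le_lam le_rfl (j+1))))
    (fun j => ?_) ((summable_o (by norm_num : 2 ≤ 3)).mul_right (lam 2))
  apply mul_le_mul_of_nonneg_left _ (o_nonneg 3 j)
  have := h_nonneg 2 (j+1)
  linarith

/-- L as 1-dimensional sum -/
lemma L_eq : ∑' p : ℕ × ℕ, FL p = ∑' j : ℕ, h 2 j * o 3 j := by
  have hs : Summable (fun c : Σ j : ℕ, Fin j => FL (eSig c)) :=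
    (summable_FL.comp_injective eSig.injective).congr (fun c => rfl)
  calc ∑' p : ℕ × ℕ, FL p = ∑' c : Σ j : ℕ, Fin j, FL (eSig c) := (eSig.tsum_eq FL).symm
    _ = ∑' (j : ℕ) (x : Fin j), FL (eSig ⟨j, x⟩) :=
        Summable.tsum_sigma' (fun j => Summable.of_finite) hs
    _ = ∑' j : ℕ, h 2 j * o 3 j := by
        apply tsum_congr
        intro j
        rw [tsum_fintype]
        have hx : ∀ x : Fin j, FL (eSig ⟨j, x⟩) = o 2 x * o 3 j := by
          intro x
          show o 2 x * o 3 ((x : ℕ) + (j - (x:ℕ) - 1) + 1) = o 2 x * o 3 j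
          have e : (x : ℕ) + (j - (x:ℕ) - 1) + 1 = j := by omega
          rw [e]
        rw [Finset.sum_congr rfl (fun x _ => hx x)]
        rw [← Finset.sum_mul, h_eq, Fin.sum_univ_eq_sum_range (fun i => o 2 i)]

lemma hasSum_FR_fiber (j : ℕ) : HasSum (fun q => FR (j, q)) (o 3 j * (lam 2 - h 2 (j+1))) := by
  have h1 := (hasSum_o_tail (s := 2) le_rfl (j+1)).mul_right (o 3 j)
  have h2 : (fun q => FR (j, q)) = fun q => o 2 (q + (j+1)) * o 3 j := by
    funext q
    show o 2 (j + q + 1) * o 3 j = _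
    have e : j + q + 1 = q + (j + 1) := by omega
    rw [e]
  rw [h2]
  convert h1 using 1
  · rfl
  ring

/-- R as 1-dimensional sum -/
lemma R_eq : ∑' p : ℕ × ℕ, FR p = ∑' j : ℕ, o 3 j * (lam 2 - h 2 (j + 1)) := by
  rw [Summable.tsum_prod' summable_FR (fun j => (hasSum_FR_fiber j).summable)]
  exact tsum_congr fun j => (hasSum_FR_fiber j).tsum_eq

lemma o_mul_o (i : ℕ) : o 2 i * o 3 i = o 5 i := by
  unfold o
  rw [div_mul_div_comm, one_mul, ← pow_add]

/-- Stuffle relation: `λ₂λ₃ = L + λ₅ + R`. -/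
lemma stuffle : lam 2 * lam 3 =
    (∑' j : ℕ, h 2 j * o 3 j) + lam 5 + ∑' j : ℕ, o 3 j * (lam 2 - h 2 (j + 1)) := by
  have hpt : ∀ j : ℕ, lam 2 * o 3 j
      = (h 2 j * o 3 j + o 5 j) + o 3 j * (lam 2 - h 2 (j + 1)) := by
    intro j
    have hsucc : h 2 (j + 1) = h 2 j + o 2 j := by
      rw [h_eq, h_eq, Finset.sum_range_succ]
    rw [hsucc, ← o_mul_o j]
    ring
  have hLsum : Summable (fun j => h 2 j * o 3 j + o 5 j) :=
    summable_hL.add (summable_o (by norm_num : 2 ≤ 5))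
  calc lam 2 * lam 3 = ∑' j : ℕ, lam 2 * o 3 j := by
        rw [tsum_mul_left]; rfl
    _ = ∑' j : ℕ, ((h 2 j * o 3 j + o 5 j) + o 3 j * (lam 2 - h 2 (j + 1))) :=
        tsum_congr hpt
    _ = (∑' j : ℕ, (h 2 j * o 3 j + o 5 j)) + ∑' j : ℕ, o 3 j * (lam 2 - h 2 (j + 1)) :=
        Summable.tsum_add hLsum summable_hR
    _ = ((∑' j : ℕ, h 2 j * o 3 j) + lam 5) + ∑' j : ℕ, o 3 j * (lam 2 - h 2 (j + 1)) := by
        rw [Summable.tsum_add summable_hL (summable_o (by norm_num : 2 ≤ 5))]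
        rfl

/-- product form of `∑ F2`. -/
lemma F2_eq_prod : ∑' p : ℕ × ℕ, F2 p = lam 2 * lam 3 := by
  rw [Summable.tsum_prod' summable_F2 (fun i => (summable_o (by norm_num : 2 ≤ 3)).mul_left (o 2 i))]
  calc ∑' (i : ℕ) (j : ℕ), o 2 i * o 3 j = ∑' i : ℕ, o 2 i * lam 3 := by
        apply tsum_congr; intro i; rw [tsum_mul_left]; rfl
    _ = lam 2 * lam 3 := by rw [tsum_mul_right]; rfl

/-- the antidiagonal weight -/
noncomputable def w (n : ℕ) : ℝ :=
  6 * h 1 (n+1) * (1/(2*((n:ℝ)+1))^4) + 3 * h 2 (n+1) * (1/(2*((n:ℝ)+1))^3)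
    + h 3 (n+1) * (1/(2*((n:ℝ)+1))^2)

/-- Euler's partial-fraction decomposition summed along an antidiagonal. -/
lemma antidiag_sum (n : ℕ) : ∑ p ∈ Finset.HasAntidiagonal.antidiagonal n, F2 p = w n := by
  rw [Finset.Nat.sum_antidiagonal_eq_sum_range_succ_mk]
  have key : ∀ i ∈ Finset.range (n+1), F2 (i, n - i)
      = (3*(1/(2*((n:ℝ)+1))^4)*o 1 i + (1/(2*((n:ℝ)+1))^3)*o 2 i)
        + (3*(1/(2*((n:ℝ)+1))^4)*o 1 (n-i) + 2*(1/(2*((n:ℝ)+1))^3)*o 2 (n-i)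
           + (1/(2*((n:ℝ)+1))^2)*o 3 (n-i)) := by
    intro i hi
    have hin : i ≤ n := by simpa [Nat.lt_succ_iff] using hi
    show o 2 i * o 3 (n - i) = _
    unfold o
    have hcast : ((n - i : ℕ) : ℝ) = (n : ℝ) - (i : ℝ) := by
      exact Nat.cast_sub hin
    rw [hcast]
    have hx : (0:ℝ) < 2*(i:ℝ)+1 := two_i_pos i
    have hiR : (i:ℝ) ≤ (n:ℝ) := by exact_mod_cast hin
    have hy : (0:ℝ) < 2*((n:ℝ)-(i:ℝ))+1 := by linarith
    have hN : (0:ℝ) < 2*((n:ℝ)+1) := by positivity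
    field_simp
    ring
  rw [Finset.sum_congr rfl key]
  simp only [Finset.sum_add_distrib, ← Finset.mul_sum]
  have r1 : ∑ i ∈ Finset.range (n+1), o 1 (n - i) = ∑ i ∈ Finset.range (n+1), o 1 i := by
    have := Finset.sum_range_reflect (fun i => o 1 i) (n+1)
    simpa using this
  have r2 : ∑ i ∈ Finset.range (n+1), o 2 (n - i) = ∑ i ∈ Finset.range (n+1), o 2 i := by
    have := Finset.sum_range_reflect (fun i => o 2 i) (n+1)
    simpa using this
  have r3 : ∑ i ∈ Finset.range (n+1), o 3 (n - i) = ∑ i ∈ Finset.range (n+1), o 3 i := by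
    have := Finset.sum_range_reflect (fun i => o 3 i) (n+1)
    simpa using this
  rw [r1, r2, r3, ← h_eq, ← h_eq, ← h_eq]
  unfold w
  ring

/-- `∑ F2` regrouped along antidiagonals. -/
lemma F2_eq_w : ∑' p : ℕ × ℕ, F2 p = ∑' n : ℕ, w n := by
  have e := Finset.HasAntidiagonal.sigmaAntidiagonalEquivProd (A := ℕ)
  have hs : Summable (fun c : Σ n : ℕ, Finset.HasAntidiagonal.antidiagonal n => F2 (Finset.HasAntidiagonal.sigmaAntidiagonalEquivProd c)) :=
    (summable_F2.comp_injective (Finset.HasAntidiagonal.sigmaAntidiagonalEquivProd).injective).congr (fun c => rfl)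
  calc ∑' p : ℕ × ℕ, F2 p
      = ∑' c : Σ n : ℕ, Finset.HasAntidiagonal.antidiagonal n, F2 (Finset.HasAntidiagonal.sigmaAntidiagonalEquivProd c) :=
        ((Finset.HasAntidiagonal.sigmaAntidiagonalEquivProd).tsum_eq F2).symm
    _ = ∑' (n : ℕ) (c : Finset.HasAntidiagonal.antidiagonal n), F2 c :=
        Summable.tsum_sigma' (fun n => Summable.of_finite) hs
    _ = ∑' n : ℕ, w n := by
        apply tsum_congr
        intro n
        rw [← antidiag_sum n, ← Finset.tsum_subtype]

/-- Summability of `w`. -/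
lemma summable_w : Summable w := by
  have hs : Summable (fun c : Σ n : ℕ, Finset.HasAntidiagonal.antidiagonal n => F2 (Finset.HasAntidiagonal.sigmaAntidiagonalEquivProd c)) :=
    (summable_F2.comp_injective (Finset.HasAntidiagonal.sigmaAntidiagonalEquivProd).injective).congr (fun c => rfl)
  have := hs.sigma
  apply this.congr
  intro n
  rw [← antidiag_sum n, ← Finset.tsum_subtype]
  rfl

lemma hasSum_V_fiber' (q : ℕ) : HasSum (fun i => FR (i, q) - FL (i, q))
    (w q - 3/4 * lam 2 * (1/((q:ℝ)+1)^3)) := by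
  have h0 := hasSum_Vfiber (q+1) (by omega)
  have hf : (fun i => FR (i, q) - FL (i, q))
      = (fun i => o 2 (i + (q+1)) * o 3 i - o 2 i * o 3 (i + (q+1))) := by
    funext i
    show o 2 (i + q + 1) * o 3 i - o 2 i * o 3 (i + q + 1) = _
    have e : i + q + 1 = i + (q + 1) := by omega
    rw [e]
  rw [hf]
  convert h0 using 1
  unfold w
  push_cast
  ring

lemma V_eq : ∑' p : ℕ × ℕ, (FR p - FL p) = lam 2 * lam 3 - 3/4 * lam 2 * Z 3 := by
  have hsub : Summable (fun p : ℕ × ℕ => FR p - FL p) := summable_FR.sub summable_FL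
  have hswap : Summable (fun p : ℕ × ℕ => FR (p.2, p.1) - FL (p.2, p.1)) := by
    exact ((Equiv.prodComm ℕ ℕ).summable_iff.2 hsub).congr (fun p => rfl)
  calc ∑' p : ℕ × ℕ, (FR p - FL p)
      = ∑' p : ℕ × ℕ, (FR (p.2, p.1) - FL (p.2, p.1)) :=
        ((Equiv.prodComm ℕ ℕ).tsum_eq (fun p : ℕ × ℕ => FR p - FL p)).symm
    _ = ∑' q : ℕ, (w q - 3/4 * lam 2 * (1/((q:ℝ)+1)^3)) := by
        rw [Summable.tsum_prod' hswap (fun q => (hasSum_V_fiber' q).summable)]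
        exact tsum_congr fun q => (hasSum_V_fiber' q).tsum_eq
    _ = (∑' q : ℕ, w q) - ∑' q : ℕ, (3/4 * lam 2 * (1/((q:ℝ)+1)^3)) :=
        Summable.tsum_sub summable_w ((summable_Znat (by norm_num : 2 ≤ 3)).mul_left (3/4 * lam 2))
    _ = lam 2 * lam 3 - 3/4 * lam 2 * Z 3 := by
        rw [tsum_mul_left, ← F2_eq_w, F2_eq_prod, ← Z_eq]

end Aux


open Aux in
theorem stmt15 :
    (∑' k : ℕ+, h 2 (k : ℕ) / (2 * ((k : ℕ) : ℝ) - 1) ^ 3) = 31 / 64 * Z 5 + 9 / 32 * Z 2 * Z 3 := by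
  have hbal := stuffle
  have hdiff : (∑' j : ℕ, o 3 j * (lam 2 - h 2 (j + 1))) - (∑' j : ℕ, h 2 j * o 3 j)
      = lam 2 * lam 3 - 3/4 * lam 2 * Z 3 := by
    rw [← R_eq, ← L_eq, ← Summable.tsum_sub summable_FR summable_FL, V_eq]
  have hS : (∑' k : ℕ+, h 2 (k : ℕ) / (2 * ((k : ℕ) : ℝ) - 1) ^ 3)
      = (∑' j : ℕ, h 2 j * o 3 j) + lam 5 := by
    rw [← Equiv.pnatEquivNat.symm.tsum_eq
      (fun k : ℕ+ => h 2 (k : ℕ) / (2 * ((k : ℕ) : ℝ) - 1) ^ 3)]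
    have hpt : ∀ j : ℕ, h 2 (((Equiv.pnatEquivNat.symm j) : ℕ+) : ℕ)
        / (2 * ((((Equiv.pnatEquivNat.symm j) : ℕ+) : ℕ) : ℝ) - 1) ^ 3
        = h 2 j * o 3 j + o 5 j := by
      intro j
      have hc : (((Equiv.pnatEquivNat.symm j) : ℕ+) : ℕ) = j + 1 := by
        simp [Equiv.pnatEquivNat, Nat.succPNat]
      rw [hc]
      have hsucc : h 2 (j + 1) = h 2 j + o 2 j := by
        rw [h_eq, h_eq, Finset.sum_range_succ]
      have hden : (2 * (((j + 1 : ℕ)) : ℝ) - 1) = 2 * (j : ℝ) + 1 := by push_cast; ring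
      rw [hsucc, hden, ← o_mul_o j]
      unfold o
      have hx : (0:ℝ) < 2 * (j:ℝ) + 1 := two_i_pos j
      field_simp
    rw [tsum_congr hpt, Summable.tsum_add summable_hL (summable_o (by norm_num : (2:ℕ) ≤ 5))]
    rfl
  have hlam2 : lam 2 = 3/4 * Z 2 := by rw [lam_eq le_rfl]; norm_num
  have hlam5 : lam 5 = 31/32 * Z 5 := by rw [lam_eq (by norm_num : 2 ≤ 5)]; norm_num
  have hL1 : (∑' j : ℕ, h 2 j * o 3 j) = 3/8 * (lam 2 * Z 3) - lam 5 / 2 := by linarith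
  rw [hS, hL1, hlam5, hlam2]
  ring
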